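/- Let π be an even permutation of a finite type (i.e., its sign is 1). Then there exist involutions σ and υ such that π = σ · υ and a₂(σ) = a₂(υ). -/

import Mathlib

set_option linter.unusedSectionVars false

open Equiv Equiv.Perm Finset

/- a₂(σ): the number of 2-cycles of an involution σ, i.e. half the cardinality of its support. -/
def a2 {α : Type*} [Fintype α] [DecidableEq α] (σ : Equiv.Perm α) : ℕ :=
  σ.support.card / 2

namespace EvenPermAux

variable {α : Type*} [Fintype α] [DecidableEq α]

lemma inv_cycleType {σ : Perm α} (h : σ * σ = 1) :
    σ.cycleType = Multiset.replicate (Multiset.card σ.cycleType) 2 := by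
  rw [Multiset.eq_replicate]
  refine ⟨rfl, fun n hn => ?_⟩
  have h2 : orderOf σ ∣ 2 := orderOf_dvd_of_pow_eq_one (by rwa [pow_two])
  have hd : n ∣ 2 := (Multiset.dvd_lcm hn).trans (σ.lcm_cycleType ▸ h2)
  exact le_antisymm (Nat.le_of_dvd two_pos hd) (two_le_of_mem_cycleType hn)

lemma inv_card_support {σ : Perm α} (h : σ * σ = 1) :
    σ.support.card = 2 * a2 σ := by
  have := σ.sum_cycleType
  rw [inv_cycleType h, Multiset.sum_replicate, smul_eq_mul] at this
  have h2 : 2 ∣ σ.support.card := ⟨_, this.symm.trans (mul_comm _ _)⟩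
  exact (Nat.mul_div_cancel' h2).symm

lemma inv_sign {σ : Perm α} (h : σ * σ = 1) :
    Perm.sign σ = (-1 : ℤˣ) ^ (a2 σ) := by
  have hs := σ.sign_of_cycleType
  have hc : Multiset.card σ.cycleType = a2 σ := by
    have := σ.sum_cycleType
    rw [inv_cycleType h, Multiset.sum_replicate, smul_eq_mul, inv_card_support h] at this
    omega
  rw [hs, σ.sum_cycleType, inv_card_support h, hc, pow_add, pow_mul]
  simp

section Model
variable (n : ℕ) [NeZero n]

def rr : Perm (ZMod n) := Equiv.addLeft 1
def uu : Perm (ZMod n) := Equiv.neg (ZMod n)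
def ss : Perm (ZMod n) := Equiv.addLeft 1 * Equiv.neg (ZMod n)

lemma rr_apply (x : ZMod n) : rr n x = 1 + x := rfl
lemma uu_apply (x : ZMod n) : uu n x = -x := rfl
lemma ss_apply (x : ZMod n) : ss n x = 1 + -x := rfl

lemma uu_mul_self : uu n * uu n = 1 := by ext x; simp [uu]
lemma ss_mul_self : ss n * ss n = 1 := by ext x; simp [ss, Perm.mul_apply]
lemma ss_mul_uu : ss n * uu n = rr n := by ext x; simp [ss, uu, rr, Perm.mul_apply]

lemma rr_isCycle (hn : 2 ≤ n) : (rr n).IsCycle := by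
  haveI : Fact (1 < n) := ⟨hn⟩
  refine ⟨0, by simp [rr_apply], fun y _ => ?_⟩
  obtain ⟨k, hk⟩ := ZMod.intCast_surjective (n := n) y
  refine ⟨k, ?_⟩
  rw [rr, zsmul_addLeft]
  show k • (1 : ZMod n) + 0 = y
  rw [add_zero, zsmul_eq_mul, mul_one, hk]

lemma rr_support (hn : 2 ≤ n) : (rr n).support = univ := by
  haveI : Fact (1 < n) := ⟨hn⟩
  ext x
  simp only [mem_support, mem_univ, iff_true, rr_apply]
  intro h
  exact one_ne_zero (add_right_cancel (b := x) (by rwa [zero_add]))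

lemma rr_support_card (hn : 2 ≤ n) : (rr n).support.card = n := by
  rw [rr_support n hn, card_univ, ZMod.card]

lemma card_support_eq (f : Perm (ZMod n)) :
    f.support.card = n - (univ.filter fun x => f x = x).card := by
  have h := card_filter_add_card_filter_not (s := (univ : Finset (ZMod n)))
    (p := fun x => f x = x)
  rw [card_univ, ZMod.card] at h
  have hs : f.support = univ.filter fun x => ¬ f x = x := by
    ext x; simp [mem_support]
  rw [hs]; omega

lemma uu_eq_iff (x : ZMod n) : uu n x = x ↔ (2 : ZMod n) * x = 0 := by
  rw [uu_apply]
  constructor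
  · intro h; linear_combination -h
  · intro h; linear_combination -h

lemma ss_eq_iff (x : ZMod n) : ss n x = x ↔ (2 : ZMod n) * x = 1 := by
  rw [ss_apply]
  constructor
  · intro h; linear_combination -h
  · intro h; linear_combination -h

lemma model_odd (hn : Odd n) : a2 (ss n) = a2 (uu n) := by
  have hu : IsUnit (2 : ZMod n) := by
    rw [show ((2 : ZMod n)) = ((2 : ℕ) : ZMod n) by push_cast; ring,
      ZMod.isUnit_iff_coprime]
    exact hn.coprime_two_left
  set i : ZMod n := ((hu.unit⁻¹ : (ZMod n)ˣ) : ZMod n) with hidef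
  have hi : i * 2 = 1 := by
    have h := Units.inv_mul hu.unit
    rwa [IsUnit.unit_spec] at h
  have key : ∀ c : ZMod n, (univ.filter fun x => (2 : ZMod n) * x = c).card = 1 := by
    intro c
    rw [show (univ.filter fun x => (2 : ZMod n) * x = c) = {i * c} from ?_, card_singleton]
    ext x
    simp only [mem_filter, mem_univ, true_and, mem_singleton]
    constructor
    · intro h; linear_combination (-x) * hi + i * h
    · intro h; rw [h]; linear_combination c * hi
  have h1 : (univ.filter fun x => ss n x = x).card = 1 := by
    simp only [ss_eq_iff]; exact key 1
  have h2 : (univ.filter fun x => uu n x = x).card = 1 := by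
    simp only [uu_eq_iff]; exact key 0
  unfold a2
  rw [card_support_eq, card_support_eq, h1, h2]

lemma model_even (hn : 2 ≤ n) (he : Even n) : a2 (ss n) = a2 (uu n) + 1 := by
  obtain ⟨m, hm⟩ := he
  have hdvd : 2 ∣ n := ⟨m, by omega⟩
  have h1 : (univ.filter fun x => ss n x = x) = ∅ := by
    ext x
    simp only [mem_filter, mem_univ, true_and, notMem_empty, iff_false, ss_eq_iff]
    intro hx
    have hφ := congrArg (ZMod.castHom hdvd (ZMod 2)) hx
    rw [map_mul, map_one] at hφ
    have h2 : (ZMod.castHom hdvd (ZMod 2)) (2 : ZMod n) = 0 := by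
      rw [map_ofNat]; decide
    rw [h2, zero_mul] at hφ
    exact absurd hφ (by decide)
  have hhalf : ((n / 2 : ℕ) : ZMod n) ≠ 0 := by
    intro h
    rw [ZMod.natCast_eq_zero_iff] at h
    have := Nat.le_of_dvd (by omega) h
    omega
  have h2 : (univ.filter fun x => uu n x = x) = {(0 : ZMod n), ((n / 2 : ℕ) : ZMod n)} := by
    ext x
    simp only [mem_filter, mem_univ, true_and, mem_insert, mem_singleton, uu_eq_iff]
    constructor
    · intro hx
      have hx' : ((2 * x.val : ℕ) : ZMod n) = 0 := by
        push_cast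
        rw [ZMod.natCast_rightInverse x]
        exact hx
      rw [ZMod.natCast_eq_zero_iff] at hx'
      have hlt := ZMod.val_lt x
      obtain ⟨k, hk⟩ := hx'
      have hk1 : k = 0 ∨ k = 1 := by
        by_contra hc
        push_neg at hc
        have hk2 : 2 ≤ k := by omega
        have hge : n * 2 ≤ n * k := Nat.mul_le_mul_left n hk2
        have hlt' : n * k < 2 * n := by rw [← hk]; omega
        omega
      rcases hk1 with rfl | rfl
      · left
        have : x.val = 0 := by omega
        rw [← ZMod.natCast_rightInverse x, this]; simp
      · right
        have : x.val = n / 2 := by omega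
        rw [← ZMod.natCast_rightInverse x, this]
    · rintro (rfl | rfl)
      · simp
      · have : ((2 : ℕ) : ZMod n) * ((n / 2 : ℕ) : ZMod n) = ((n : ℕ) : ZMod n) := by
          rw [← Nat.cast_mul]; congr 1; omega
        rw [ZMod.natCast_self] at this
        push_cast at this
        exact this
  have hcard2 : ({(0 : ZMod n), ((n / 2 : ℕ) : ZMod n)} : Finset (ZMod n)).card = 2 := by
    rw [card_insert_of_notMem (by simpa using hhalf.symm), card_singleton]
  unfold a2
  rw [card_support_eq, card_support_eq, h1, h2, hcard2, card_empty]
  omega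

lemma model_cases (hn : 2 ≤ n) :
    a2 (ss n) = a2 (uu n) ∨ a2 (ss n) = a2 (uu n) + 1 := by
  rcases Nat.even_or_odd n with he | ho
  · exact Or.inr (model_even n hn he)
  · exact Or.inl (model_odd n ho)

end Model

/-- the main cycle lemma -/
lemma cycle_case (c : Perm α) (hc : c.IsCycle) :
    ∃ σ υ : Perm α, σ * σ = 1 ∧ υ * υ = 1 ∧ c = σ * υ ∧
      σ.support ⊆ c.support ∧ υ.support ⊆ c.support ∧
      (a2 σ = a2 υ ∨ a2 σ = a2 υ + 1) := by
  set n := c.support.card with hndef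
  have hn : 2 ≤ n := two_le_card_support_of_ne_one hc.ne_one
  haveI : NeZero n := ⟨by omega⟩
  have hcards : Fintype.card (ZMod n) = Fintype.card {x // x ∈ c.support} := by
    rw [ZMod.card, Fintype.card_coe]
  obtain ⟨e⟩ : Nonempty (ZMod n ≃ {x // x ∈ c.support}) :=
    ⟨Fintype.equivOfCardEq hcards⟩
  set R : Perm α := (rr n).extendDomain e with hR
  set S : Perm α := (ss n).extendDomain e with hS
  set U : Perm α := (uu n).extendDomain e with hU
  have hRc : R.IsCycle := (rr_isCycle n hn).extendDomain e
  have hRcard : R.support.card = n := by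
    rw [hR, support_extend_domain, card_map, rr_support_card n hn]
  obtain ⟨g, hg⟩ := isConj_iff.mp (hRc.isConj hc (by rw [hRcard]))
  refine ⟨g * S * g⁻¹, g * U * g⁻¹, ?_, ?_, ?_, ?_, ?_, ?_⟩
  · have : S * S = 1 := by
      rw [hS, extendDomain_mul, ss_mul_self, extendDomain_one]
    calc g * S * g⁻¹ * (g * S * g⁻¹) = g * (S * S) * g⁻¹ := by group
    _ = 1 := by rw [this]; group
  · have : U * U = 1 := by
      rw [hU, extendDomain_mul, uu_mul_self, extendDomain_one]
    calc g * U * g⁻¹ * (g * U * g⁻¹) = g * (U * U) * g⁻¹ := by group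
    _ = 1 := by rw [this]; group
  · have hSU : S * U = R := by
      rw [hS, hU, hR, extendDomain_mul, ss_mul_uu]
    calc c = g * R * g⁻¹ := hg.symm
    _ = g * (S * U) * g⁻¹ := by rw [hSU]
    _ = g * S * g⁻¹ * (g * U * g⁻¹) := by group
  · rw [support_conj, ← hg, support_conj]
    apply Finset.map_subset_map.mpr
    rw [hS, hR, support_extend_domain, support_extend_domain]
    apply Finset.map_subset_map.mpr
    rw [rr_support n hn]
    exact subset_univ _
  · rw [support_conj, ← hg, support_conj]
    apply Finset.map_subset_map.mpr
    rw [hU, hR, support_extend_domain, support_extend_domain]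
    apply Finset.map_subset_map.mpr
    rw [rr_support n hn]
    exact subset_univ _
  · have ha2S : a2 (g * S * g⁻¹) = a2 (ss n) := by
      unfold a2
      rw [support_conj, card_map, hS, support_extend_domain, card_map]
    have ha2U : a2 (g * U * g⁻¹) = a2 (uu n) := by
      unfold a2
      rw [support_conj, card_map, hU, support_extend_domain, card_map]
    rw [ha2S, ha2U]
    exact model_cases n hn

/-- swap the roles: π = σ·υ = (συσ⁻¹)·σ -/
lemma swap_pair {π σ υ : Perm α} (hσ : σ * σ = 1) (hυ : υ * υ = 1) (hπ : π = σ * υ) :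
    ∃ σ' υ' : Perm α, σ' * σ' = 1 ∧ υ' * υ' = 1 ∧ π = σ' * υ' ∧
      a2 σ' = a2 υ ∧ a2 υ' = a2 σ ∧
      σ'.support ⊆ σ.support ∪ υ.support ∧ υ'.support ⊆ σ.support ∪ υ.support := by
  refine ⟨σ * υ * σ⁻¹, σ, ?_, hσ, ?_, ?_, rfl, ?_, ?_⟩
  · calc σ * υ * σ⁻¹ * (σ * υ * σ⁻¹) = σ * (υ * υ) * σ⁻¹ := by group
    _ = 1 := by rw [hυ]; group
  · calc π = σ * υ := hπ
    _ = σ * υ * σ⁻¹ * σ := by group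
  · unfold a2; rw [support_conj, card_map]
  · rw [support_conj]
    intro y hy
    obtain ⟨x, hx, rfl⟩ := Finset.mem_map.mp hy
    by_cases h : σ x = x
    · simp only [toEmbedding_apply, h]
      exact Finset.mem_union_right _ hx
    · exact Finset.mem_union_left _ ((apply_mem_support).mpr (mem_support.mpr h))
  · exact Finset.subset_union_left

def P (π : Perm α) : Prop :=
  ∃ σ υ : Perm α, σ * σ = 1 ∧ υ * υ = 1 ∧ π = σ * υ ∧
    σ.support ⊆ π.support ∧ υ.support ⊆ π.support ∧
    (a2 σ = a2 υ ∨ a2 σ = a2 υ + 1)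

lemma a2_mul_disjoint {σ₁ σ₂ : Perm α} (h : Perm.Disjoint σ₁ σ₂)
    (h1 : σ₁ * σ₁ = 1) (h2 : σ₂ * σ₂ = 1) : a2 (σ₁ * σ₂) = a2 σ₁ + a2 σ₂ := by
  unfold a2
  rw [h.support_mul, card_union_of_disjoint (disjoint_iff_disjoint_support.mp h)]
  have e1 := inv_card_support h1
  have e2 := inv_card_support h2
  unfold a2 at e1 e2
  omega

lemma mul_inv_of_disjoint {σ₁ σ₂ : Perm α} (h : Perm.Disjoint σ₁ σ₂)
    (h1 : σ₁ * σ₁ = 1) (h2 : σ₂ * σ₂ = 1) : (σ₁ * σ₂) * (σ₁ * σ₂) = 1 := by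
  have hc := h.commute
  calc σ₁ * σ₂ * (σ₁ * σ₂) = σ₁ * (σ₂ * σ₁) * σ₂ := by group
  _ = σ₁ * (σ₁ * σ₂) * σ₂ := by rw [hc.eq]
  _ = (σ₁ * σ₁) * (σ₂ * σ₂) := by group
  _ = 1 := by rw [h1, h2, mul_one]

lemma combine {f g : Perm α} (hd : Perm.Disjoint f g) (hf : P f) (hg : P g) :
    P (f * g) := by
  obtain ⟨σ₁, υ₁, hσ₁, hυ₁, hf1, hsσ₁, hsυ₁, hd₁⟩ := hf
  obtain ⟨σ₂, υ₂, hσ₂, hυ₂, hg1, hsσ₂, hsυ₂, hd₂⟩ := hg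
  -- in the (+1, +1) case, flip the second pair
  have key : ∃ σ₂' υ₂' : Perm α, σ₂' * σ₂' = 1 ∧ υ₂' * υ₂' = 1 ∧ g = σ₂' * υ₂' ∧
      σ₂'.support ⊆ g.support ∧ υ₂'.support ⊆ g.support ∧
      ((a2 σ₁ = a2 υ₁ ∧ (a2 σ₂' = a2 υ₂' ∨ a2 σ₂' = a2 υ₂' + 1)) ∨
       (a2 σ₁ = a2 υ₁ + 1 ∧ (a2 σ₂' = a2 υ₂' ∨ a2 υ₂' = a2 σ₂' + 1))) := by
    rcases hd₁ with h₁ | h₁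
    · exact ⟨σ₂, υ₂, hσ₂, hυ₂, hg1, hsσ₂, hsυ₂, Or.inl ⟨h₁, hd₂⟩⟩
    · rcases hd₂ with h₂ | h₂
      · exact ⟨σ₂, υ₂, hσ₂, hυ₂, hg1, hsσ₂, hsυ₂, Or.inr ⟨h₁, Or.inl h₂⟩⟩
      · obtain ⟨σ₂', υ₂', ha, hb, hcc, hd', he', hs1, hs2⟩ := swap_pair hσ₂ hυ₂ hg1
        refine ⟨σ₂', υ₂', ha, hb, hcc, ?_, ?_, Or.inr ⟨h₁, Or.inr (by omega)⟩⟩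
        · exact hs1.trans (Finset.union_subset hsσ₂ hsυ₂)
        · exact hs2.trans (Finset.union_subset hsσ₂ hsυ₂)
  obtain ⟨σ₂', υ₂', hσ₂', hυ₂', hg1', hsσ₂', hsυ₂', hcase⟩ := key
  have hdsupp := disjoint_iff_disjoint_support.mp hd
  have dis : ∀ {a b : Perm α}, a.support ⊆ f.support → b.support ⊆ g.support →
      Perm.Disjoint a b := fun hha hhb =>
    disjoint_iff_disjoint_support.mpr (Finset.disjoint_of_subset_left hha
      (Finset.disjoint_of_subset_right hhb hdsupp))
  have d_σσ : Perm.Disjoint σ₁ σ₂' := dis hsσ₁ hsσ₂'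
  have d_υυ : Perm.Disjoint υ₁ υ₂' := dis hsυ₁ hsυ₂'
  have d_υσ : Perm.Disjoint υ₁ σ₂' := dis hsυ₁ hsσ₂'
  refine ⟨σ₁ * σ₂', υ₁ * υ₂', mul_inv_of_disjoint d_σσ hσ₁ hσ₂',
    mul_inv_of_disjoint d_υυ hυ₁ hυ₂', ?_, ?_, ?_, ?_⟩
  · calc f * g = (σ₁ * υ₁) * (σ₂' * υ₂') := by rw [← hf1, ← hg1']
    _ = σ₁ * (υ₁ * σ₂') * υ₂' := by group
    _ = σ₁ * (σ₂' * υ₁) * υ₂' := by rw [d_υσ.commute.eq]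
    _ = σ₁ * σ₂' * (υ₁ * υ₂') := by group
  · refine (support_mul_le _ _).trans ?_
    rw [hd.support_mul]
    exact Finset.union_subset_union hsσ₁ hsσ₂'
  · refine (support_mul_le _ _).trans ?_
    rw [hd.support_mul]
    exact Finset.union_subset_union hsυ₁ hsυ₂'
  · rw [a2_mul_disjoint d_σσ hσ₁ hσ₂', a2_mul_disjoint d_υυ hυ₁ hυ₂']
    omega

lemma P_holds (π : Perm α) : P π := by
  induction π using cycle_induction_on with
  | base_one =>
    exact ⟨1, 1, mul_one 1, mul_one 1, (mul_one 1).symm, by simp, by simp, Or.inl rfl⟩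
  | base_cycles c hc =>
    obtain ⟨σ, υ, h1, h2, h3, h4, h5, h6⟩ := cycle_case c hc
    exact ⟨σ, υ, h1, h2, h3, h4, h5, h6⟩
  | induction_disjoint f g hd hc hf hg => exact combine hd hf hg

end EvenPermAux

/- Every even permutation is the product of two involutions with equally many transpositions. -/
theorem even_perm_eq_prod_two_involutions {α : Type*} [Fintype α] [DecidableEq α]
    (π : Equiv.Perm α) (h : Equiv.Perm.sign π = 1) :
    ∃ σ υ : Equiv.Perm α, σ * σ = 1 ∧ υ * υ = 1 ∧ π = σ * υ ∧ a2 σ = a2 υ := by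
  obtain ⟨σ, υ, h1, h2, h3, _, _, hcase⟩ := EvenPermAux.P_holds π
  refine ⟨σ, υ, h1, h2, h3, ?_⟩
  rcases hcase with heq | hodd
  · exact heq
  · exfalso
    have hsign : Equiv.Perm.sign π = (-1 : ℤˣ) ^ (a2 σ + a2 υ) := by
      rw [h3, map_mul, EvenPermAux.inv_sign h1, EvenPermAux.inv_sign h2, pow_add]
    rw [hsign, hodd] at h
    have hodd' : Odd (a2 υ + 1 + a2 υ) := ⟨a2 υ, by ring⟩
    rw [hodd'.neg_one_pow] at h
    exact absurd h (by decide)
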